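/- Let (X,d) be a metric space and K a nonempty subset of X. Let A, B, S, T be selfmaps of K. Suppose there exist a function ψ satisfying Condition-A and a function φ ∈ Φ such that for all x, y ∈ K: ψ(d(Sx,Ty), d(Sx,Ty)) ≤ φ(max{ψ(d(Ax,By), d(Ax,Sx)), ψ(d(Ax,By), d(By,Ty)), ψ(d(Ax,Sx), d(By,Ty)), ψ(d(By,Ty), d(Ax,Sx)), min{ψ(d(By,Sx), d(Ax,Sx)), ψ(d(Ax,Ty), d(By,Ty))}, min{ψ(d(By,Sx), d(By,Ty)), ψ(d(Ax,Ty), d(Ax,Sx))}}). Assume the pairs (A,S) and (B,T) are weakly compatible, the closure of T(K) is contained in A(K), and the closure of S(K) is contained in B(K). If at least one of the sets closure of T(K), closure of S(K), A(K), or B(K) is complete, then A, B, S and T have a unique common fixed point. -/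

import Mathlib

open Set
open scoped NNReal

/-- A two-variable auxiliary function `ψ : ℝ₊ × ℝ₊ → ℝ₊` satisfies Condition-A if it is
continuous, monotone increasing in each argument, `ψ(0,0) = 0`, and `ψ(t,0) = 0` implies
`t = 0`. -/
def ConditionA (ψ : ℝ≥0 → ℝ≥0 → ℝ≥0) : Prop :=
  Continuous (Function.uncurry ψ) ∧
  (∀ t, Monotone fun s => ψ s t) ∧
  (∀ s, Monotone fun t => ψ s t) ∧
  ψ 0 0 = 0 ∧
  ∀ t, ψ t 0 = 0 → t = 0

/-- `φ ∈ Φ`: `φ : ℝ₊ → ℝ₊` is monotonically increasing, continuous, and `0 < φ(t) < t`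
for all `t > 0`. -/
def InPhi (φ : ℝ≥0 → ℝ≥0) : Prop :=
  Monotone φ ∧ Continuous φ ∧ ∀ t, 0 < t → 0 < φ t ∧ φ t < t

section Aux
variable {ψ : ℝ≥0 → ℝ≥0 → ℝ≥0} {φ : ℝ≥0 → ℝ≥0}

lemma phi_le (hφ : InPhi φ) (t : ℝ≥0) : φ t ≤ t := by
  rcases eq_or_lt_of_le (zero_le : (0:ℝ≥0) ≤ t) with h | h
  · have h0 : φ 0 ≤ 0 := by
      by_contra hc
      push_neg at hc
      exact absurd (hφ.1 (zero_le : (0:ℝ≥0) ≤ φ 0)) (not_le.mpr (hφ.2.2 _ hc).2)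
    simpa [← h] using h0
  · exact (hφ.2.2 t h).2.le

lemma fix_zero (hφ : InPhi φ) {s : ℝ≥0} (h : s ≤ φ s) : s = 0 := by
  by_contra hs
  exact absurd h (not_le.mpr (hφ.2.2 s (pos_iff_ne_zero.mpr hs)).2)

lemma psi_diag_zero (hψ : ConditionA ψ) {t : ℝ≥0} (h : ψ t t = 0) : t = 0 := by
  have h1 : ψ t 0 ≤ ψ t t := hψ.2.2.1 t (zero_le : (0:ℝ≥0) ≤ t)
  exact hψ.2.2.2.2 t (le_antisymm (h ▸ h1) zero_le)

lemma psi_fix (hψ : ConditionA ψ) (hφ : InPhi φ) {t : ℝ≥0}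
    (h : ψ t t ≤ φ (ψ t t)) : t = 0 :=
  psi_diag_zero hψ (fix_zero hφ h)

lemma psi_le2 (hψ : ConditionA ψ) {a b c : ℝ≥0} (ha : a ≤ c) (hb : b ≤ c) :
    ψ a b ≤ ψ c c :=
  le_trans (hψ.2.1 b ha) (hψ.2.2.1 c hb)

lemma contr_reduce {X : Type*} [MetricSpace X] {K : Set X} {A B S T : X → X}
    (hψ : ConditionA ψ) (hφ : InPhi φ)
    (hcontr : ∀ x ∈ K, ∀ y ∈ K,
      ψ (nndist (S x) (T y)) (nndist (S x) (T y)) ≤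
        φ (max (ψ (nndist (A x) (B y)) (nndist (A x) (S x)))
          (max (ψ (nndist (A x) (B y)) (nndist (B y) (T y)))
          (max (ψ (nndist (A x) (S x)) (nndist (B y) (T y)))
          (max (ψ (nndist (B y) (T y)) (nndist (A x) (S x)))
          (max (min (ψ (nndist (B y) (S x)) (nndist (A x) (S x)))
                    (ψ (nndist (A x) (T y)) (nndist (B y) (T y))))
               (min (ψ (nndist (B y) (S x)) (nndist (B y) (T y)))
                    (ψ (nndist (A x) (T y)) (nndist (A x) (S x))))))))))
    {x y : X} (hx : x ∈ K) (hy : y ∈ K) {c : ℝ≥0}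
    (h1 : nndist (A x) (B y) ≤ c) (h2 : nndist (A x) (S x) ≤ c)
    (h3 : nndist (B y) (T y) ≤ c)
    (h4 : nndist (B y) (S x) ≤ c ∨ nndist (A x) (T y) ≤ c) :
    ψ (nndist (S x) (T y)) (nndist (S x) (T y)) ≤ φ (ψ c c) := by
  refine (hcontr x hx y hy).trans (hφ.1 ?_)
  refine max_le (psi_le2 hψ h1 h2) (max_le (psi_le2 hψ h1 h3)
    (max_le (psi_le2 hψ h2 h3) (max_le (psi_le2 hψ h3 h2) (max_le ?_ ?_))))
  · rcases h4 with h | h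
    · exact (min_le_left _ _).trans (psi_le2 hψ h h2)
    · exact (min_le_right _ _).trans (psi_le2 hψ h h3)
  · rcases h4 with h | h
    · exact (min_le_left _ _).trans (psi_le2 hψ h h3)
    · exact (min_le_right _ _).trans (psi_le2 hψ h h2)

end Aux

theorem stmt_0 {X : Type*} [MetricSpace X] (K : Set X) (hK : K.Nonempty)
    (A B S T : X → X)
    (hA : MapsTo A K K) (hB : MapsTo B K K) (hS : MapsTo S K K) (hT : MapsTo T K K)
    (ψ : ℝ≥0 → ℝ≥0 → ℝ≥0) (hψ : ConditionA ψ)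
    (φ : ℝ≥0 → ℝ≥0) (hφ : InPhi φ)
    (hcontr : ∀ x ∈ K, ∀ y ∈ K,
      ψ (nndist (S x) (T y)) (nndist (S x) (T y)) ≤
        φ (max (ψ (nndist (A x) (B y)) (nndist (A x) (S x)))
          (max (ψ (nndist (A x) (B y)) (nndist (B y) (T y)))
          (max (ψ (nndist (A x) (S x)) (nndist (B y) (T y)))
          (max (ψ (nndist (B y) (T y)) (nndist (A x) (S x)))
          (max (min (ψ (nndist (B y) (S x)) (nndist (A x) (S x)))
                    (ψ (nndist (A x) (T y)) (nndist (B y) (T y))))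
               (min (ψ (nndist (B y) (S x)) (nndist (B y) (T y)))
                    (ψ (nndist (A x) (T y)) (nndist (A x) (S x))))))))))
    (hAS : ∀ x ∈ K, A x = S x → A (S x) = S (A x))
    (hBT : ∀ x ∈ K, B x = T x → B (T x) = T (B x))
    (hTA : closure (T '' K) ⊆ A '' K)
    (hSB : closure (S '' K) ⊆ B '' K)
    (hcomp : IsComplete (closure (T '' K)) ∨ IsComplete (closure (S '' K)) ∨
             IsComplete (A '' K) ∨ IsComplete (B '' K)) :
    ∃! z, z ∈ K ∧ A z = z ∧ B z = z ∧ S z = z ∧ T z = z := by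
  classical
  obtain ⟨x0, hx0⟩ := hK
  -- coincidence lemma
  have coinc : ∀ p ∈ K, ∀ q ∈ K, A p = S p → B q = T q → S p = T q := by
    intro p hp q hq hp' hq'
    have h := contr_reduce hψ hφ hcontr hp hq (c := nndist (S p) (T q))
      (le_of_eq (by rw [hp', hq'])) (by rw [hp']; simp) (by rw [hq']; simp)
      (Or.inr (le_of_eq (by rw [hp'])))
    have := psi_fix hψ hφ h
    rwa [nndist_eq_zero] at this
  -- final step, given coincidence points for both pairs
  have final : (∃ z u v, u ∈ K ∧ v ∈ K ∧ A u = z ∧ S u = z ∧ B v = z ∧ T v = z) →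
      ∃! z, z ∈ K ∧ A z = z ∧ B z = z ∧ S z = z ∧ T z = z := by
    rintro ⟨z, u, v, huK, hvK, hAu, hSu, hBv, hTv⟩
    have hzK : z ∈ K := hAu ▸ hA huK
    have hASz : A z = S z := by
      have h := hAS u huK (hAu.trans hSu.symm)
      rwa [hSu, hAu] at h
    have hBTz : B z = T z := by
      have h := hBT v hvK (hBv.trans hTv.symm)
      rwa [hTv, hBv] at h
    have hSz : S z = z := by
      have h := coinc z hzK v hvK hASz (hBv.trans hTv.symm)
      rw [hTv] at h; exact h
    have hTz : T z = z := by
      have h := coinc u huK z hzK (hAu.trans hSu.symm) hBTz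
      rw [hSu] at h; exact h.symm
    refine ⟨z, ⟨hzK, hASz.trans hSz, hBTz.trans hTz, hSz, hTz⟩, ?_⟩
    rintro w ⟨hwK, hAw, hBw, hSw, hTw⟩
    have h := coinc w hwK z hzK (hAw.trans hSw.symm) hBTz
    rw [hSw, hTz] at h; exact h
  apply final
  -- sequence construction
  have hTA' : T '' K ⊆ A '' K := subset_closure.trans hTA
  have hSB' : S '' K ⊆ B '' K := subset_closure.trans hSB
  have exA : ∀ p : X, ∃ q, p ∈ K → q ∈ K ∧ A q = T p := by
    intro p
    by_cases hp : p ∈ K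
    · obtain ⟨q, hq, hqe⟩ := hTA' ⟨p, hp, rfl⟩
      exact ⟨q, fun _ => ⟨hq, hqe⟩⟩
    · exact ⟨x0, fun h => absurd h hp⟩
  have exB : ∀ p : X, ∃ q, p ∈ K → q ∈ K ∧ B q = S p := by
    intro p
    by_cases hp : p ∈ K
    · obtain ⟨q, hq, hqe⟩ := hSB' ⟨p, hp, rfl⟩
      exact ⟨q, fun _ => ⟨hq, hqe⟩⟩
    · exact ⟨x0, fun h => absurd h hp⟩
  choose fA hfA using exA
  choose fB hfB using exB
  obtain ⟨x, hxz, hxs⟩ : ∃ x : ℕ → X, x 0 = x0 ∧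
      ∀ n, x (n+1) = if Even n then fA (x n) else fB (x n) :=
    ⟨fun n => Nat.rec x0 (fun n xn => if Even n then fA xn else fB xn) n, rfl, fun n => rfl⟩
  have hxK : ∀ n, x n ∈ K := by
    intro n
    induction n with
    | zero => rw [hxz]; exact hx0
    | succ n ih =>
      rw [hxs]
      split
      · exact (hfA (x n) ih).1
      · exact (hfB (x n) ih).1
  obtain ⟨y, hyE, hyO⟩ : ∃ y : ℕ → X, (∀ n, Even n → y n = T (x n)) ∧
      (∀ n, ¬Even n → y n = S (x n)) :=
    ⟨fun n => if Even n then T (x n) else S (x n), fun n h => if_pos h, fun n h => if_neg h⟩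
  have key1 : ∀ n, Even n → A (x (n+1)) = y n ∧ S (x (n+1)) = y (n+1) := by
    intro n h
    constructor
    · rw [hxs, if_pos h, (hfA (x n) (hxK n)).2, hyE n h]
    · rw [hyO (n+1) (by simp [Nat.even_add_one, h])]
  have key2 : ∀ n, ¬Even n → B (x (n+1)) = y n ∧ T (x (n+1)) = y (n+1) := by
    intro n h
    constructor
    · rw [hxs, if_neg h, (hfB (x n) (hxK n)).2, hyO n h]
    · rw [hyE (n+1) (by simp [Nat.even_add_one, h])]
  set d : ℕ → ℝ≥0 := fun n => nndist (y n) (y (n+1)) with hd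
  -- the basic step inequality
  have step : ∀ n, ψ (d (n+1)) (d (n+1)) ≤
      φ (ψ (max (d n) (d (n+1))) (max (d n) (d (n+1)))) := by
    intro n
    rcases Nat.even_or_odd n with h | h
    · -- n even, n+1 odd : pair (x (n+1), x (n+2))
      obtain ⟨hA1, hS1⟩ := key1 n h
      have h1 : ¬Even (n+1) := by simp [Nat.even_add_one, h]
      obtain ⟨hB2, hT2⟩ := key2 (n+1) h1
      have hcr := contr_reduce hψ hφ hcontr (hxK (n+1)) (hxK (n+2))
        (c := max (d n) (d (n+1)))
        (by rw [hA1, hB2]; exact le_max_left _ _)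
        (by rw [hA1, hS1]; exact le_max_left _ _)
        (by rw [hB2, hT2]; exact le_max_right _ _)
        (Or.inl (by rw [hB2, hS1]; simp))
      rwa [hS1, hT2] at hcr
    · -- n odd, n+1 even : pair (x (n+2), x (n+1))
      have h' : ¬Even n := Nat.not_even_iff_odd.mpr h
      obtain ⟨hB1, hT1⟩ := key2 n h'
      have h1 : Even (n+1) := Nat.even_add_one.mpr h'
      obtain ⟨hA2, hS2⟩ := key1 (n+1) h1
      have hcr := contr_reduce hψ hφ hcontr (hxK (n+2)) (hxK (n+1))
        (c := max (d n) (d (n+1)))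
        (by rw [hA2, hB1, nndist_comm]; exact le_max_left _ _)
        (by rw [hA2, hS2]; exact le_max_right _ _)
        (by rw [hB1, hT1]; exact le_max_left _ _)
        (Or.inr (by rw [hA2, hT1]; simp))
      rwa [hS2, hT1, nndist_comm] at hcr
  have hdanti : ∀ n, d (n+1) ≤ d n := by
    intro n
    by_contra hc
    push_neg at hc
    have hmax : max (d n) (d (n+1)) = d (n+1) := max_eq_right hc.le
    have h0 : d (n+1) = 0 := psi_fix hψ hφ (by
      have := step n; rwa [hmax] at this)
    exact absurd (h0 ▸ hc) (by simp)
  have step' : ∀ n, ψ (d (n+1)) (d (n+1)) ≤ φ (ψ (d n) (d n)) := by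
    intro n
    have := step n
    rwa [max_eq_left (hdanti n)] at this
  have hg : Continuous fun s : ℝ≥0 => ψ s s := by
    have : (fun s : ℝ≥0 => ψ s s) = (Function.uncurry ψ) ∘ (fun s => (s, s)) := rfl
    rw [this]
    exact hψ.1.comp (continuous_id.prodMk continuous_id)
  have hd0 : Filter.Tendsto d Filter.atTop (nhds 0) := by
    have hanti : Antitone d := antitone_nat_of_succ_le hdanti
    have hdr : Filter.Tendsto d Filter.atTop (nhds (⨅ n, d n)) :=
      tendsto_atTop_ciInf hanti (OrderBot.bddBelow _)
    have h1 : Filter.Tendsto (fun n => ψ (d n) (d n)) Filter.atTop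
        (nhds (ψ (⨅ n, d n) (⨅ n, d n))) := (hg.tendsto _).comp hdr
    have h2 : Filter.Tendsto (fun n => ψ (d (n+1)) (d (n+1))) Filter.atTop
        (nhds (ψ (⨅ n, d n) (⨅ n, d n))) := h1.comp (Filter.tendsto_add_atTop_nat 1)
    have h3 : Filter.Tendsto (fun n => φ (ψ (d n) (d n))) Filter.atTop
        (nhds (φ (ψ (⨅ n, d n) (⨅ n, d n)))) := (hφ.2.1.tendsto _).comp h1
    have hr : ψ (⨅ n, d n) (⨅ n, d n) ≤ φ (ψ (⨅ n, d n) (⨅ n, d n)) :=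
      le_of_tendsto_of_tendsto' h2 h3 step'
    have : (⨅ n, d n) = 0 := psi_fix hψ hφ hr
    rwa [this] at hdr
  have hyc : CauchySeq y := by
    by_contra hcau
    rw [Metric.cauchySeq_iff] at hcau
    push_neg at hcau
    obtain ⟨ε₀, hε₀, hsep⟩ := hcau
    set ε : ℝ≥0 := ⟨ε₀, hε₀.le⟩ with hεdef
    have hεpos : 0 < ε := hε₀
    obtain ⟨e, hepos, he2⟩ : ∃ e : ℝ≥0, 0 < e ∧ e + e ≤ ε :=
      ⟨ε / 2, by positivity, by
        rw [← two_mul]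
        rw [mul_comm, div_mul_cancel₀ _ (by norm_num : (2:ℝ≥0) ≠ 0)]⟩
    have hcpos : 0 < ψ e e := pos_iff_ne_zero.mpr fun h => hepos.ne' (psi_diag_zero hψ h)
    -- continuity: find η with φ (ψ (e+η) (e+η)) < ψ e e
    have hGcont : Continuous fun s : ℝ≥0 => φ (ψ s s) := hφ.2.1.comp hg
    have hnb : {s : ℝ≥0 | φ (ψ s s) < ψ e e} ∈ nhds e :=
      (isOpen_lt hGcont continuous_const).mem_nhds (hφ.2.2 _ hcpos).2
    obtain ⟨δr, hδr, hball⟩ := Metric.mem_nhds_iff.mp hnb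
    obtain ⟨η, hηpos, hηe, hGη⟩ : ∃ η : ℝ≥0, 0 < η ∧ η ≤ e ∧
        φ (ψ (e + η) (e + η)) < ψ e e := by
      refine ⟨min (Real.toNNReal (δr/2)) e,
        lt_min (Real.toNNReal_pos.mpr (by linarith)) hepos, min_le_right _ _, ?_⟩
      apply hball
      rw [Metric.mem_ball, NNReal.dist_eq]
      have h1 : ((e + min (Real.toNNReal (δr/2)) e : ℝ≥0) : ℝ) - (e:ℝ)
          = ((min (Real.toNNReal (δr/2)) e : ℝ≥0) : ℝ) := by push_cast; ring
      rw [h1, abs_of_nonneg (min (Real.toNNReal (δr/2)) e).coe_nonneg]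
      calc ((min (Real.toNNReal (δr/2)) e : ℝ≥0) : ℝ)
          ≤ ((Real.toNNReal (δr/2) : ℝ≥0) : ℝ) := by exact_mod_cast min_le_left _ _
        _ = δr/2 := Real.coe_toNNReal _ (by linarith)
        _ < δr := by linarith
    set δ : ℝ≥0 := η / 5 with hδdef
    have hδη : δ * 5 = η := div_mul_cancel₀ _ (by norm_num : (5:ℝ≥0) ≠ 0)
    have hδpos : 0 < δ := by
      rw [hδdef]; exact div_pos hηpos (by norm_num)
    have hkδ : ∀ k : ℝ≥0, k ≤ 5 → δ * k ≤ η := fun k hk =>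
      (mul_le_mul_of_nonneg_left hk zero_le).trans hδη.le
    have h2δe : δ + δ ≤ e := by
      calc δ + δ = δ * 2 := by ring
        _ ≤ η := hkδ 2 (by norm_num)
        _ ≤ e := hηe
    have hδe : δ < e := lt_of_lt_of_le (lt_add_of_pos_left δ hδpos) h2δe
    -- N with d n < δ for n ≥ N
    obtain ⟨N, hN⟩ := Filter.eventually_atTop.mp (hd0.eventually (gt_mem_nhds hδpos))
    -- a violating pair beyond N+1
    obtain ⟨m₀, hm₀, n₀, hn₀, hsep0⟩ := hsep (N + 1)
    have hsep1 : ε ≤ nndist (y m₀) (y n₀) := by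
      rw [← NNReal.coe_le_coe, coe_nndist]; exact hsep0
    obtain ⟨a, b, haN, hbN, hab, hsep2⟩ : ∃ a b, N + 1 ≤ a ∧ N + 1 ≤ b ∧ a < b ∧
        ε ≤ nndist (y a) (y b) := by
      rcases lt_trichotomy m₀ n₀ with h | h | h
      · exact ⟨m₀, n₀, hm₀, hn₀, h, hsep1⟩
      · rw [h, nndist_self] at hsep1
        exact absurd (le_antisymm hsep1 zero_le) hεpos.ne'
      · exact ⟨n₀, m₀, hn₀, hm₀, h, by rwa [nndist_comm]⟩
    obtain ⟨a', ha'N, ha'odd, ha'ab⟩ : ∃ a', N + 1 ≤ a' ∧ ¬Even a' ∧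
        (a' = a ∨ a' = a + 1) := by
      by_cases h : Even a
      · exact ⟨a + 1, haN.trans (Nat.le_succ a), by simp [Nat.even_add_one, h], Or.inr rfl⟩
      · exact ⟨a, haN, h, Or.inl rfl⟩
    obtain ⟨j₀, hj₀even, hj₀b⟩ : ∃ j₀, Even j₀ ∧ (j₀ = b ∨ j₀ = b + 1) := by
      by_cases h : Even b
      · exact ⟨b, h, Or.inl rfl⟩
      · exact ⟨b + 1, Nat.even_add_one.mpr h, Or.inr rfl⟩
    have hyaa' : nndist (y a) (y a') ≤ δ := by
      rcases ha'ab with h | h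
      · rw [h, nndist_self]; exact hδpos.le
      · rw [h]; exact (hN a (by omega)).le
    have hyjb : nndist (y j₀) (y b) ≤ δ := by
      rcases hj₀b with h | h
      · rw [h, nndist_self]; exact hδpos.le
      · rw [h, nndist_comm]; exact (hN b (by omega)).le
    have hX : e ≤ nndist (y a') (y j₀) := by
      have htri : nndist (y a) (y b) ≤
          nndist (y a) (y a') + nndist (y a') (y j₀) + nndist (y j₀) (y b) :=
        (nndist_triangle _ (y j₀) _).trans
          (add_le_add_left (nndist_triangle _ (y a') _) _)
      have h1 : e + (δ + δ) ≤ nndist (y a') (y j₀) + (δ + δ) := by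
        calc e + (δ + δ) ≤ e + e := add_le_add_right h2δe e
          _ ≤ ε := he2
          _ ≤ nndist (y a) (y b) := hsep2
          _ ≤ nndist (y a) (y a') + nndist (y a') (y j₀) + nndist (y j₀) (y b) := htri
          _ ≤ δ + nndist (y a') (y j₀) + δ := by
              exact add_le_add (add_le_add_left hyaa' _) hyjb
          _ = nndist (y a') (y j₀) + (δ + δ) := by ring
      exact le_of_add_le_add_right h1
    have ha'j₀ : a' < j₀ := by
      have h1 : a' ≤ j₀ := by omega
      rcases h1.lt_or_eq with h | h
      · exact h
      · exact absurd (h ▸ hj₀even) ha'odd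
    -- minimal even index beyond a' at nndist ≥ e from y a'
    have hPne : ∃ k, a' < 2 * k ∧ e ≤ nndist (y a') (y (2 * k)) := by
      obtain ⟨k₀, hk₀⟩ := hj₀even
      exact ⟨k₀, by omega, by rw [(by omega : 2 * k₀ = j₀)]; exact hX⟩
    set k := Nat.find hPne with hkdef
    obtain ⟨hak, hek⟩ := Nat.find_spec hPne
    rw [← hkdef] at hak hek
    have hamod : a' % 2 = 1 := Nat.not_even_iff.mp ha'odd
    have hne : 2 * k ≠ a' + 1 := by
      intro h
      rw [h] at hek
      have h2 : e ≤ d a' := hek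
      exact absurd (lt_of_le_of_lt h2 ((hN a' (by omega)).trans hδe)) (lt_irrefl e)
    have hak3 : a' + 1 < 2 * k := by omega
    have hk1 : 1 ≤ k := by omega
    obtain ⟨j, hjdef⟩ : ∃ j, j = 2 * (k - 1) := ⟨_, rfl⟩
    have hjk : 2 * k = j + 2 := by omega
    have hja : a' < j := by omega
    have hjN : N + 1 ≤ j := by omega
    have hub2 : nndist (y a') (y j) < e := by
      by_contra h
      push_neg at h
      exact absurd ⟨by omega, by rw [← hjdef]; exact h⟩
        (Nat.find_min hPne (by omega : k - 1 < k))
    have hub : nndist (y a') (y (j + 2)) ≤ e + (δ + δ) := by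
      calc nndist (y a') (y (j + 2)) ≤
          nndist (y a') (y j) + nndist (y j) (y (j + 1)) + nndist (y (j + 1)) (y (j + 2)) :=
            (nndist_triangle _ (y (j+1)) _).trans
              (add_le_add_left (nndist_triangle _ (y j) _) _)
        _ ≤ e + δ + δ := add_le_add (add_le_add hub2.le (hN j (by omega)).le)
            (hN (j+1) (by omega)).le
        _ = e + (δ + δ) := by ring
    -- contraction at the pair (x a', x (j+2))
    obtain ⟨a'', ha''⟩ : ∃ a'', a' = a'' + 1 := ⟨a' - 1, by omega⟩
    subst ha''
    have ha''even : Even a'' := by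
      rcases Nat.even_or_odd a'' with h | h
      · exact h
      · exact absurd (Nat.even_add_one.mpr (Nat.not_even_iff_odd.mpr h)) ha'odd
    obtain ⟨hA1, hS1⟩ := key1 a'' ha''even
    have hjeven : Even j := ⟨k - 1, by omega⟩
    have hjodd : ¬Even (j + 1) := by simp [Nat.even_add_one, hjeven]
    obtain ⟨hB2, hT2⟩ := key2 (j + 1) hjodd
    have hjj : j + 1 + 1 = j + 2 := rfl
    rw [hjj] at hB2 hT2
    have hda'' : d a'' ≤ δ := (hN a'' (by omega)).le
    have hdj1 : d (j + 1) ≤ δ := (hN (j + 1) (by omega)).le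
    have hfin := contr_reduce hψ hφ hcontr (hxK (a'' + 1)) (hxK (j + 2)) (c := e + η)
      (by rw [hA1, hB2]
          calc nndist (y a'') (y (j + 1)) ≤
              nndist (y a'') (y (a'' + 1)) + nndist (y (a'' + 1)) (y (j + 2))
                + nndist (y (j + 2)) (y (j + 1)) :=
                (nndist_triangle _ (y (j+2)) _).trans
                  (add_le_add_left (nndist_triangle _ (y (a''+1)) _) _)
            _ ≤ δ + (e + (δ + δ)) + δ := by
                refine add_le_add (add_le_add hda'' hub) ?_
                rw [nndist_comm]; exact hdj1
            _ = e + δ * 4 := by ring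
            _ ≤ e + η := add_le_add_right (hkδ 4 (by norm_num)) e)
      (by rw [hA1, hS1]
          calc nndist (y a'') (y (a'' + 1)) ≤ δ := hda''
            _ ≤ η := by calc δ = δ * 1 := by ring
                          _ ≤ η := hkδ 1 (by norm_num)
            _ ≤ e + η := le_add_self)
      (by rw [hB2, hT2]
          calc nndist (y (j + 1)) (y (j + 2)) ≤ δ := hdj1
            _ ≤ η := by calc δ = δ * 1 := by ring
                          _ ≤ η := hkδ 1 (by norm_num)
            _ ≤ e + η := le_add_self)
      (Or.inl (by
          rw [hB2, hS1]
          calc nndist (y (j + 1)) (y (a'' + 1)) ≤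
              nndist (y (j + 1)) (y (j + 2)) + nndist (y (j + 2)) (y (a'' + 1)) :=
                nndist_triangle _ _ _
            _ ≤ δ + (e + (δ + δ)) := by
                refine add_le_add hdj1 ?_
                rw [nndist_comm]; exact hub
            _ = e + δ * 3 := by ring
            _ ≤ e + η := add_le_add_right (hkδ 3 (by norm_num)) e))
    rw [hS1, hT2] at hfin
    have hek' : e ≤ nndist (y (a'' + 1)) (y (j + 2)) := by
      rw [← hjk]; exact hek
    have hchain : ψ e e ≤ φ (ψ (e + η) (e + η)) :=
      (psi_le2 hψ hek' hek').trans hfin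
    exact absurd hGη (not_lt.mpr hchain)
  -- limits
  have h2k : Filter.Tendsto (fun k : ℕ => 2 * k) Filter.atTop Filter.atTop :=
    Filter.tendsto_atTop_atTop.mpr (fun b => ⟨b, fun a ha => by omega⟩)
  have h2k1 : Filter.Tendsto (fun k : ℕ => 2 * k + 1) Filter.atTop Filter.atTop :=
    Filter.tendsto_atTop_atTop.mpr (fun b => ⟨b, fun a ha => by omega⟩)
  have tend_aux : ∀ (z : X) (u v : ℕ → X),
      Filter.Tendsto (fun k => nndist (u k) (v k)) Filter.atTop (nhds 0) →
      Filter.Tendsto v Filter.atTop (nhds z) → Filter.Tendsto u Filter.atTop (nhds z) := by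
    intro z u v h1 h2
    have h2' := tendsto_iff_dist_tendsto_zero.mp h2
    have h1' : Filter.Tendsto (fun k => dist (u k) (v k)) Filter.atTop (nhds 0) := by
      have h := NNReal.tendsto_coe.mpr h1
      simpa [coe_nndist] using h
    rw [tendsto_iff_dist_tendsto_zero]
    apply squeeze_zero (fun k => dist_nonneg) (fun k => dist_triangle (u k) (v k) z)
    simpa using h1'.add h2'
  have hde0 : Filter.Tendsto (fun k => d (2 * k)) Filter.atTop (nhds 0) := hd0.comp h2k
  have hdo0 : Filter.Tendsto (fun k => d (2 * k + 1)) Filter.atTop (nhds 0) := hd0.comp h2k1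
  -- get a limit point in A '' K or B '' K
  obtain ⟨z, hz⟩ : ∃ z, (z ∈ A '' K ∧ Filter.Tendsto (fun k => y (2 * k)) Filter.atTop (nhds z))
      ∨ (z ∈ B '' K ∧ Filter.Tendsto (fun k => y (2 * k + 1)) Filter.atTop (nhds z)) := by
    have hyeK : ∀ k : ℕ, y (2 * k) ∈ T '' K := fun k =>
      (hyE (2 * k) (even_two_mul k)) ▸ ⟨x (2 * k), hxK _, rfl⟩
    have hyoK : ∀ k : ℕ, y (2 * k + 1) ∈ S '' K := fun k =>
      (hyO (2 * k + 1) (by simp [Nat.even_add_one])) ▸ ⟨x (2 * k + 1), hxK _, rfl⟩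
    have hce : CauchySeq fun k => y (2 * k) := hyc.comp_tendsto h2k
    have hco : CauchySeq fun k => y (2 * k + 1) := hyc.comp_tendsto h2k1
    rcases hcomp with hc | hc | hc | hc
    · obtain ⟨z, hzmem, hzt⟩ :=
        cauchySeq_tendsto_of_isComplete hc (fun k => subset_closure (hyeK k)) hce
      exact ⟨z, Or.inl ⟨hTA hzmem, hzt⟩⟩
    · obtain ⟨z, hzmem, hzt⟩ :=
        cauchySeq_tendsto_of_isComplete hc (fun k => subset_closure (hyoK k)) hco
      exact ⟨z, Or.inr ⟨hSB hzmem, hzt⟩⟩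
    · obtain ⟨z, hzmem, hzt⟩ :=
        cauchySeq_tendsto_of_isComplete hc (fun k => hTA' (hyeK k)) hce
      exact ⟨z, Or.inl ⟨hzmem, hzt⟩⟩
    · obtain ⟨z, hzmem, hzt⟩ :=
        cauchySeq_tendsto_of_isComplete hc (fun k => hSB' (hyoK k)) hco
      exact ⟨z, Or.inr ⟨hzmem, hzt⟩⟩
  rcases hz with ⟨⟨u, huK, hAu⟩, hze⟩ | ⟨⟨v, hvK, hBv⟩, hzo⟩
  · -- Case A : z = A u, even subsequence converges to z
    have hzo : Filter.Tendsto (fun k => y (2 * k + 1)) Filter.atTop (nhds z) := by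
      refine tend_aux z _ _ ?_ hze
      have heq : (fun k => nndist (y (2 * k + 1)) (y (2 * k))) = fun k => d (2 * k) :=
        funext fun k => nndist_comm _ _
      rw [heq]; exact hde0
    have hze2 : Filter.Tendsto (fun k => y (2 * k + 2)) Filter.atTop (nhds z) := by
      have h := hze.comp (Filter.tendsto_add_atTop_nat 1)
      have heq : ((fun k => y (2 * k)) ∘ fun n => n + 1) = fun k => y (2 * k + 2) :=
        funext fun k => congrArg y (by ring)
      rwa [heq] at h
    have hSu : S u = z := by
      have hkey : ∀ k : ℕ, B (x (2 * k + 2)) = y (2 * k + 1) ∧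
          T (x (2 * k + 2)) = y (2 * k + 2) := fun k =>
        key2 (2 * k + 1) (by simp [Nat.even_add_one])
      obtain ⟨m, hm⟩ : ∃ m : ℕ → ℝ≥0, m = fun k =>
          max (nndist (A u) (y (2 * k + 1))) (max (nndist (A u) (S u))
            (max (d (2 * k + 1)) (nndist (y (2 * k + 1)) (S u)))) := ⟨_, rfl⟩
      have hineq : ∀ k, ψ (nndist (S u) (y (2 * k + 2))) (nndist (S u) (y (2 * k + 2))) ≤
          φ (ψ (m k) (m k)) := by
        intro k
        have hcr := contr_reduce hψ hφ hcontr huK (hxK (2 * k + 2)) (c := m k)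
          (by rw [(hkey k).1, hm]; exact le_max_left _ _)
          (by rw [hm]; exact le_max_of_le_right (le_max_left _ _))
          (by rw [(hkey k).1, (hkey k).2, hm]
              exact le_max_of_le_right (le_max_of_le_right (le_max_left _ _)))
          (Or.inl (by rw [(hkey k).1, hm]
                      exact le_max_of_le_right (le_max_of_le_right (le_max_right _ _))))
        rwa [(hkey k).2] at hcr
      have hLHS : Filter.Tendsto
          (fun k => ψ (nndist (S u) (y (2 * k + 2))) (nndist (S u) (y (2 * k + 2))))
          Filter.atTop (nhds (ψ (nndist (S u) z) (nndist (S u) z))) :=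
        (hg.tendsto _).comp (Filter.Tendsto.nndist tendsto_const_nhds hze2)
      have hmt : Filter.Tendsto m Filter.atTop (nhds (nndist (S u) z)) := by
        rw [hm]
        have h := (Filter.Tendsto.nndist (tendsto_const_nhds (x := A u)) hzo).max
          ((tendsto_const_nhds (x := nndist (A u) (S u))).max
            (hdo0.max (Filter.Tendsto.nndist hzo (tendsto_const_nhds (x := S u)))))
        have heq : max (nndist (A u) z) (max (nndist (A u) (S u))
            (max 0 (nndist z (S u)))) = nndist (S u) z := by
          simp [hAu, nndist_comm]
        rwa [heq] at h
      have hRHS : Filter.Tendsto (fun k => φ (ψ (m k) (m k))) Filter.atTop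
          (nhds (φ (ψ (nndist (S u) z) (nndist (S u) z)))) :=
        ((hφ.2.1.tendsto _).comp ((hg.tendsto _).comp hmt))
      have hfix : ψ (nndist (S u) z) (nndist (S u) z) ≤
          φ (ψ (nndist (S u) z) (nndist (S u) z)) :=
        le_of_tendsto_of_tendsto' hLHS hRHS hineq
      have := psi_fix hψ hφ hfix
      rwa [nndist_eq_zero] at this
    obtain ⟨v, hvK, hBv⟩ : z ∈ B '' K := hSB' ⟨u, huK, hSu⟩
    have hTv : T v = z := by
      have hcr := contr_reduce hψ hφ hcontr huK hvK (c := nndist z (T v))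
        (by rw [hAu, hBv]; simp)
        (by rw [hAu, hSu]; simp)
        (le_of_eq (by rw [hBv]))
        (Or.inl (by rw [hBv, hSu]; simp))
      rw [hSu] at hcr
      have := psi_fix hψ hφ hcr
      rw [nndist_eq_zero] at this
      exact this.symm
    exact ⟨z, u, v, huK, hvK, hAu, hSu, hBv, hTv⟩
  · -- Case B : z = B v, odd subsequence converges to z
    have hze : Filter.Tendsto (fun k => y (2 * k)) Filter.atTop (nhds z) :=
      tend_aux z _ _ hde0 hzo
    have hTv : T v = z := by
      have hkey : ∀ k : ℕ, A (x (2 * k + 1)) = y (2 * k) ∧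
          S (x (2 * k + 1)) = y (2 * k + 1) := fun k => key1 (2 * k) (even_two_mul k)
      obtain ⟨m, hm⟩ : ∃ m : ℕ → ℝ≥0, m = fun k =>
          max (nndist (y (2 * k)) (B v)) (max (d (2 * k))
            (max (nndist (B v) (T v)) (nndist (B v) (y (2 * k + 1))))) := ⟨_, rfl⟩
      have hineq : ∀ k, ψ (nndist (y (2 * k + 1)) (T v)) (nndist (y (2 * k + 1)) (T v)) ≤
          φ (ψ (m k) (m k)) := by
        intro k
        have hcr := contr_reduce hψ hφ hcontr (hxK (2 * k + 1)) hvK (c := m k)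
          (by rw [(hkey k).1, hm]; exact le_max_left _ _)
          (by rw [(hkey k).1, (hkey k).2, hm]
              exact le_max_of_le_right (le_max_left _ _))
          (by rw [hm]; exact le_max_of_le_right (le_max_of_le_right (le_max_left _ _)))
          (Or.inl (by rw [(hkey k).2, hm]
                      exact le_max_of_le_right (le_max_of_le_right (le_max_right _ _))))
        rwa [(hkey k).2] at hcr
      have hLHS : Filter.Tendsto
          (fun k => ψ (nndist (y (2 * k + 1)) (T v)) (nndist (y (2 * k + 1)) (T v)))
          Filter.atTop (nhds (ψ (nndist z (T v)) (nndist z (T v)))) :=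
        (hg.tendsto _).comp (Filter.Tendsto.nndist hzo tendsto_const_nhds)
      have hmt : Filter.Tendsto m Filter.atTop (nhds (nndist z (T v))) := by
        rw [hm]
        have h := (Filter.Tendsto.nndist hze (tendsto_const_nhds (x := B v))).max
          (hde0.max ((tendsto_const_nhds (x := nndist (B v) (T v))).max
            (Filter.Tendsto.nndist (tendsto_const_nhds (x := B v)) hzo)))
        have heq : max (nndist z (B v)) (max 0 (max (nndist (B v) (T v))
            (nndist (B v) z))) = nndist z (T v) := by
          simp [hBv]
        rwa [heq] at h
      have hRHS : Filter.Tendsto (fun k => φ (ψ (m k) (m k))) Filter.atTop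
          (nhds (φ (ψ (nndist z (T v)) (nndist z (T v))))) :=
        ((hφ.2.1.tendsto _).comp ((hg.tendsto _).comp hmt))
      have hfix : ψ (nndist z (T v)) (nndist z (T v)) ≤
          φ (ψ (nndist z (T v)) (nndist z (T v))) :=
        le_of_tendsto_of_tendsto' hLHS hRHS hineq
      have := psi_fix hψ hφ hfix
      rw [nndist_eq_zero] at this
      exact this.symm
    obtain ⟨u, huK, hAu⟩ : z ∈ A '' K := hTA' ⟨v, hvK, hTv⟩
    have hSu : S u = z := by
      have hcr := contr_reduce hψ hφ hcontr huK hvK (c := nndist (S u) z)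
        (by rw [hAu, hBv]; simp)
        (by rw [hAu, nndist_comm])
        (by rw [hBv, hTv]; simp)
        (Or.inr (by rw [hAu, hTv]; simp))
      rw [hTv] at hcr
      have := psi_fix hψ hφ hcr
      rwa [nndist_eq_zero] at this
    exact ⟨z, u, v, huK, hvK, hAu, hSu, hBv, hTv⟩
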